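/- The Ishikawa constraint set (1 = u_{L_0} ≥ u_{L_1} ≥ … ≥ u_{L_N} ≥ 0) is in bijection with the GHMF constraint set on the caterpillar hierarchy in which each L_i (0 ≤ i ≤ N−1) has two children L_{i+1} and leaf B_{i+1}, via u_{B_i} = u_{L_{i-1}} − u_{L_i}; the inverse map is u_{L_i} = u_{L_{i+1}} + u_{B_{i+1}} recovered from the leaf values. -/

import Mathlib

open scoped Classical


lemma cat_key {Ω : Type} {N : ℕ} (u : Fin (N + 1) → Ω → ℝ) (b : Fin N → Ω → ℝ)
    (h : ∀ i : Fin N, ∀ x, u i.castSucc x = u i.succ x + b i x) :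
    ∀ i : Fin (N + 1), ∀ x, u i x = u (Fin.last N) x +
      ∑ j ∈ Finset.univ.filter (fun j : Fin N => (i : ℕ) ≤ (j : ℕ)), b j x := by
  intro i
  induction i using Fin.reverseInduction with
  | last =>
      intro x
      have : Finset.univ.filter (fun j : Fin N => N ≤ (j : ℕ)) = ∅ := by
        ext j
        simp only [Finset.mem_filter, Finset.mem_univ, true_and,
          Finset.notMem_empty, iff_false, not_le, Fin.val_last]
        exact j.isLt
      simp [this]
  | cast i ih =>
      intro x
      have hset : Finset.univ.filter (fun j : Fin N => (i.castSucc : ℕ) ≤ (j : ℕ)) =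
          insert i (Finset.univ.filter (fun j : Fin N => (i.succ : ℕ) ≤ (j : ℕ))) := by
        ext j
        simp [Fin.ext_iff]
        omega
      have hnotmem : i ∉ Finset.univ.filter (fun j : Fin N => (i.succ : ℕ) ≤ (j : ℕ)) := by
        simp
      rw [hset, Finset.sum_insert hnotmem, h i x, ih x]
      ring


/-- The Ishikawa constraint set is in bijection with the GHMF constraint set on
the caterpillar hierarchy (each `L_i` has children `L_{i+1}` and leaf `B_{i+1}`),
via `u_{B_i} = u_{L_{i-1}} - u_{L_i}`; the inverse recovers `u_{L_i}` from the
leaf values as `u_{L_N} + Σ_{j ≥ i} u_{B_{j+1}}`. -/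
theorem ishikawa_caterpillar_bijection {Ω : Type} [Fintype Ω] (N : ℕ) (hN : 1 ≤ N) :
    let IshSet : Set (Fin (N + 1) → Ω → ℝ) :=
      {v | (∀ x, v 0 x = 1) ∧ (∀ i x, 0 ≤ v i x) ∧
        ∀ i : Fin N, ∀ x, v i.succ x ≤ v i.castSucc x}
    let GSet : Set ((Fin (N + 1) → Ω → ℝ) × (Fin N → Ω → ℝ)) :=
      {p | (∀ i x, 0 ≤ p.1 i x) ∧ (∀ i x, 0 ≤ p.2 i x) ∧
        (∀ x, p.1 0 x = 1) ∧
        ∀ i : Fin N, ∀ x, p.1 i.castSucc x = p.1 i.succ x + p.2 i x}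
    let f : (Fin (N + 1) → Ω → ℝ) → (Fin (N + 1) → Ω → ℝ) × (Fin N → Ω → ℝ) :=
      fun v => (v, fun i x => v i.castSucc x - v i.succ x)
    let g : (Fin (N + 1) → Ω → ℝ) × (Fin N → Ω → ℝ) → (Fin (N + 1) → Ω → ℝ) :=
      fun p i x => p.1 (Fin.last N) x +
        ∑ j ∈ Finset.univ.filter (fun j : Fin N => (i : ℕ) ≤ (j : ℕ)), p.2 j x
    Set.BijOn f IshSet GSet ∧ Set.InvOn g f IshSet GSet := by
  intro IshSet GSet f g
  have hleft : Set.LeftInvOn g f IshSet := by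
    intro v hv
    funext i x
    exact (cat_key v (fun i x => v i.castSucc x - v i.succ x) (fun i x => by ring) i x).symm
  have hright : Set.RightInvOn g f GSet := by
    rintro p ⟨hp1, hp2, hp3, hp4⟩
    have hg : g p = p.1 := funext fun i => funext fun x => (cat_key p.1 p.2 hp4 i x).symm
    show f (g p) = p
    rw [hg]
    refine Prod.ext rfl ?_
    funext i x
    show p.1 i.castSucc x - p.1 i.succ x = p.2 i x
    rw [hp4 i x]; ring
  have hmapsf : Set.MapsTo f IshSet GSet := by
    rintro v ⟨h1, h2, h3⟩
    refine ⟨h2, fun i x => sub_nonneg.2 (h3 i x), h1, fun i x => by ring⟩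
  have hmapsg : Set.MapsTo g GSet IshSet := by
    rintro p ⟨hp1, hp2, hp3, hp4⟩
    have hg : g p = p.1 := funext fun i => funext fun x => (cat_key p.1 p.2 hp4 i x).symm
    show g p ∈ IshSet
    rw [hg]
    exact ⟨hp3, hp1, fun i x => by rw [hp4 i x]; linarith [hp2 i x]⟩
  exact ⟨Set.InvOn.bijOn ⟨hleft, hright⟩ hmapsf hmapsg, hleft, hright⟩
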